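/- Assume 0 < p, q < 1 and let p_s = p_s^e = s with 0 < s < 1. Let g : (0,1] → ℝ denote the map sending the transmission probability p_α to π(0,0,1) + π(1,1,0) (with π built from p, q, s, s, p_α). Then: (i) if p + q > 1, g is monotone nondecreasing on (0,1]; (ii) if p + q < 1, g is monotone nonincreasing on (0,1]; (iii) if p + q = 1, g is constant on (0,1]. -/

import Mathlib

open Matrix

noncomputable section

/-- λ11 = p_α p_s p_s^e -/
def l11 (ps pse pa : ℝ) : ℝ := pa * ps * pse
/-- λ10 = p_α p_s (1 − p_s^e) -/
def l10 (ps pse pa : ℝ) : ℝ := pa * ps * (1 - pse)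
/-- λ01 = p_α (1 − p_s) p_s^e -/
def l01 (ps pse pa : ℝ) : ℝ := pa * (1 - ps) * pse
/-- λ00 = p_α (1 − p_s)(1 − p_s^e) + (1 − p_α) -/
def l00 (ps pse pa : ℝ) : ℝ := pa * (1 - ps) * (1 - pse) + (1 - pa)
/-- P_A = λ11 + λ10 -/
def PA (ps pse pa : ℝ) : ℝ := l11 ps pse pa + l10 ps pse pa
/-- P_B = λ11 + λ01 -/
def PB (ps pse pa : ℝ) : ℝ := l11 ps pse pa + l01 ps pse pa

/-- Source transition matrix Q. -/
def Qm (p q : ℝ) : Matrix (Fin 2) (Fin 2) ℝ := !![1 - p, p; q, 1 - q]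

/-- Stationary distribution of the source: v_0 = q/(p+q), v_1 = p/(p+q). -/
def vstat (p q : ℝ) : Fin 2 → ℝ := ![q / (p + q), p / (p + q)]

/-- T1(x,a,b) = δ(a,b) v_a λ11 [(I − λ00 Q)⁻¹]_{a,x} -/
def T1 (p q ps pse pa : ℝ) (x a b : Fin 2) : ℝ :=
  (if a = b then (1 : ℝ) else 0) * vstat p q a * l11 ps pse pa *
    ((1 - l00 ps pse pa • Qm p q)⁻¹ a x)

/-- T2(x,a,b) = v_b λ10 P_B [Q (I − (1−P_B) Q)⁻¹]_{b,a} [(I − λ00 Q)⁻¹]_{a,x} -/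
def T2 (p q ps pse pa : ℝ) (x a b : Fin 2) : ℝ :=
  vstat p q b * l10 ps pse pa * PB ps pse pa *
    ((Qm p q * (1 - (1 - PB ps pse pa) • Qm p q)⁻¹) b a) *
    ((1 - l00 ps pse pa • Qm p q)⁻¹ a x)

/-- T3(x,a,b) = v_a λ01 P_A [Q (I − (1−P_A) Q)⁻¹]_{a,b} [(I − λ00 Q)⁻¹]_{b,x} -/
def T3 (p q ps pse pa : ℝ) (x a b : Fin 2) : ℝ :=
  vstat p q a * l01 ps pse pa * PA ps pse pa *
    ((Qm p q * (1 - (1 - PA ps pse pa) • Qm p q)⁻¹) a b) *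
    ((1 - l00 ps pse pa • Qm p q)⁻¹ b x)

/-- π(x,a,b) = T1 + T2 + T3 -/
def piDist (p q ps pse pa : ℝ) (x a b : Fin 2) : ℝ :=
  T1 p q ps pse pa x a b + T2 p q ps pse pa x a b + T3 p q ps pse pa x a b

/-- Remark 3: in the symmetric-channel case p_s = p_s^e = s, the CRA is monotone
in the transmission probability, with direction given by the sign of p + q − 1. -/

lemma inv_formula (p q c : ℝ) (h1 : (1 : ℝ) - c ≠ 0) (h2 : 1 - c * (1 - p - q) ≠ 0) :
    (1 - c • Qm p q)⁻¹ =
      ((1 - c) * (1 - c * (1 - p - q)))⁻¹ •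
        !![1 - c * (1 - q), c * p; c * q, 1 - c * (1 - p)] := by
  have hd : (1 - c) * (1 - c * (1 - p - q)) ≠ 0 := mul_ne_zero h1 h2
  apply inv_eq_right_inv
  ext i j
  fin_cases i <;> fin_cases j <;>
    simp [Qm, Matrix.mul_apply, Fin.sum_univ_two, Matrix.one_apply, Matrix.sub_apply,
      Matrix.smul_apply] <;>
    field_simp <;> ring

set_option maxHeartbeats 1600000 in
lemma g_eval (p q s pa : ℝ)
    (hp0 : 0 < p) (hp1 : p < 1) (hq0 : 0 < q) (hq1 : q < 1)
    (hs0 : 0 < s) (hs1 : s < 1) (hpa0 : 0 < pa) (hpa1 : pa ≤ 1) :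
    piDist p q s s pa 0 0 1 + piDist p q s s pa 1 1 0 =
      2 * p * q * (1 - s) /
        ((p + q) * (2 - s) * (p + q + (1 - p - q) * s * pa)) := by
  have hr1 : 1 - p - q < 1 := by linarith
  have hr2 : -1 < 1 - p - q := by linarith
  have hps : 0 < pa * s := mul_pos hpa0 hs0
  have hps1 : pa * s ≤ s := mul_le_of_le_one_left hs0.le hpa1
  have hL00 : l00 s s pa = 1 - pa * s * (2 - s) := by simp only [l00]; ring
  have hPA : PA s s pa = pa * s := by simp only [PA, l11, l10]; ring
  have hPB : PB s s pa = pa * s := by simp only [PB, l11, l01]; ring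
  have hl10 : l10 s s pa = pa * s * (1 - s) := by simp only [l10]
  have hl01 : l01 s s pa = pa * (1 - s) * s := by simp only [l01]
  have h2s : 0 < 2 - s := by linarith
  have hc0a : 0 < 1 - (1 - pa * s * (2 - s)) := by nlinarith
  have hc0nn : 0 <= 1 - pa * s * (2 - s) := by
    nlinarith [mul_nonneg (mul_nonneg (show (0:ℝ) <= 1 - pa by linarith) hs0.le) h2s.le,
      sq_nonneg (1 - s)]
  have hc0c : 0 < 1 - (1 - pa * s * (2 - s)) * (1 - p - q) := by
    nlinarith [mul_nonneg hc0nn (show (0:ℝ) <= 1 - (1 - p - q) by linarith)]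
  have hcAa : 0 < 1 - (1 - pa * s) := by nlinarith
  have hcAc : 0 < 1 - (1 - pa * s) * (1 - p - q) := by
    nlinarith [mul_nonneg (show (0:ℝ) <= 1 - pa * s by nlinarith)
      (show (0:ℝ) <= 1 - (1 - p - q) by linarith)]
  have hpq : 0 < p + q := by linarith
  have hD : 0 < p + q + (1 - p - q) * s * pa := by
    nlinarith [mul_nonneg hpq.le (show (0:ℝ) <= 1 - s * pa by nlinarith), hps]
  simp only [piDist, T1, T2, T3, hL00, hPA, hPB, hl10, hl01, vstat]
  rw [inv_formula p q (1 - pa * s * (2 - s)) (by linarith) (by linarith),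
    inv_formula p q (1 - pa * s) (by linarith) (by linarith)]
  simp only [Qm, Matrix.mul_apply, Fin.sum_univ_two, Matrix.smul_apply,
    Matrix.cons_val_zero, Matrix.cons_val_one, Matrix.head_cons, Matrix.cons_val',
    Matrix.cons_val_fin_one, Matrix.empty_val', Matrix.head_fin_const, Fin.isValue,
    smul_eq_mul, Fin.zero_eq_one_iff, Fin.one_eq_zero_iff, Nat.succ_ne_self,
    ite_false, if_false]
  norm_num
  have k1 : ((1 - (1 - pa * s * (2 - s))) * (1 - (1 - pa * s * (2 - s)) * (1 - p - q))) ≠ 0 :=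
    (mul_pos hc0a hc0c).ne'
  have k2 : ((1 - (1 - pa * s)) * (1 - (1 - pa * s) * (1 - p - q))) ≠ 0 :=
    (mul_pos hcAa hcAc).ne'
  have k3 := hc0c.ne'
  have k4 := hcAc.ne'
  have k5 := hs0.ne'
  have k6 := hpa0.ne'
  have k7 := h2s.ne'
  have k8 := hpq.ne'
  have k9 := hD.ne'
  field_simp
  rw [div_eq_div_iff (by intro h; apply k3; linarith) (by intro h; apply k9; linarith)]
  ring

theorem stmt15 (p q s : ℝ)
    (hp0 : 0 < p) (hp1 : p < 1) (hq0 : 0 < q) (hq1 : q < 1)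
    (hs0 : 0 < s) (hs1 : s < 1) :
    let g : ℝ → ℝ := fun pa => piDist p q s s pa 0 0 1 + piDist p q s s pa 1 1 0
    (1 < p + q → MonotoneOn g (Set.Ioc (0 : ℝ) 1)) ∧
    (p + q < 1 → AntitoneOn g (Set.Ioc (0 : ℝ) 1)) ∧
    (p + q = 1 → ∀ x ∈ Set.Ioc (0 : ℝ) 1, ∀ y ∈ Set.Ioc (0 : ℝ) 1, g x = g y) := by
  intro g
  have hgeq : ∀ x ∈ Set.Ioc (0 : ℝ) 1, g x =
      2 * p * q * (1 - s) / ((p + q) * (2 - s) * (p + q + (1 - p - q) * s * x)) := by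
    intro x hx
    exact g_eval p q s x hp0 hp1 hq0 hq1 hs0 hs1 hx.1 hx.2
  have hN : 0 < 2 * p * q * (1 - s) := by
    nlinarith [mul_pos (mul_pos hp0 hq0) (show (0:ℝ) < 1 - s by linarith)]
  have hK : 0 < (p + q) * (2 - s) := by nlinarith
  have hD : ∀ x ∈ Set.Ioc (0 : ℝ) 1, 0 < p + q + (1 - p - q) * s * x := by
    intro x hx
    have h1 := hx.1; have h2 := hx.2
    have hsx : 0 < s * x := mul_pos hs0 h1
    have hsx1 : s * x <= 1 := by nlinarith
    nlinarith [mul_nonneg (show (0:ℝ) <= p + q by linarith) (show (0:ℝ) <= 1 - s * x by linarith)]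
  refine ⟨?_, ?_, ?_⟩
  · intro h x hx y hy hxy
    rw [hgeq x hx, hgeq y hy]
    have hDx := hD x hx; have hDy := hD y hy
    rw [div_le_div_iff₀ (by positivity) (by positivity)]
    have hxy' : (1 - p - q) * s * y ≤ (1 - p - q) * s * x := by
      nlinarith [mul_nonneg (mul_nonneg hs0.le (show (0:ℝ) <= y - x by linarith))
        (show (0:ℝ) <= p + q - 1 by linarith)]
    nlinarith [mul_le_mul_of_nonneg_left
      (show p + q + (1 - p - q) * s * y <= p + q + (1 - p - q) * s * x by linarith)
      (mul_pos hN hK).le]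
  · intro h x hx y hy hxy
    rw [hgeq x hx, hgeq y hy]
    have hDx := hD x hx; have hDy := hD y hy
    rw [div_le_div_iff₀ (by positivity) (by positivity)]
    have hxy' : (1 - p - q) * s * x ≤ (1 - p - q) * s * y := by
      nlinarith [mul_nonneg (mul_nonneg hs0.le (show (0:ℝ) <= y - x by linarith))
        (show (0:ℝ) <= 1 - p - q by linarith)]
    nlinarith [mul_le_mul_of_nonneg_left
      (show p + q + (1 - p - q) * s * x <= p + q + (1 - p - q) * s * y by linarith)
      (mul_pos hN hK).le]
  · intro h x hx y hy
    rw [hgeq x hx, hgeq y hy]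
    rw [show (1 : ℝ) - p - q = 0 by linarith]
    ring
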